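/- Every injective object in the category of sheaves of abelian groups on a topological space X is flabby: if I is an injective sheaf of abelian groups on X, then for every open subset U ⊆ X the restriction map I(X) → I(U) is surjective. -/

import Mathlib

open CategoryTheory TopologicalSpace Opposite CategoryTheory.Limits TopCat TopCat.Presheaf

namespace FlabbyAux

universe v u

variable {X : TopCat.{u}}

/-- ULift ℤ as an object of AddCommGrpCat. -/
abbrev ZA : AddCommGrpCat.{v} := AddCommGrpCat.of (ULift.{v} ℤ)

/-- The morphism `ZA ⟶ M` sending `1` to `s`. -/
def toHom {M : AddCommGrpCat.{v}} (s : M) : ZA ⟶ M :=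
  AddCommGrpCat.ofHom ((zmultiplesHom M s).comp AddEquiv.ulift.toAddMonoidHom)

@[simp] lemma toHom_one {M : AddCommGrpCat.{v}} (s : M) : toHom s (ULift.up 1) = s :=
  one_zsmul s

lemma hom_ext_ZA {M : AddCommGrpCat.{v}} (f g : ZA ⟶ M)
    (h : f (ULift.up 1) = g (ULift.up 1)) : f = g := by
  ext ⟨n⟩
  have h1 : (ULift.up n : ULift ℤ) = n • (ULift.up 1 : ULift ℤ) := by
    ext; simp
  rw [h1, map_zsmul, map_zsmul, h]

/-- The element-level unique gluing property for an `AddCommGrpCat`-valued presheaf. -/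
def ElemGluing (F : TopCat.Presheaf AddCommGrpCat.{v} X) : Prop :=
  ∀ {ι : Type u} (V : ι → Opens X) (sf : ∀ i, F.obj (op (V i))),
    (∀ i j, F.map (Opens.infLELeft (V i) (V j)).op (sf i) =
      F.map (Opens.infLERight (V i) (V j)).op (sf j)) →
    ∃! s : F.obj (op (iSup V)), ∀ i, F.map (Opens.leSupr V i).op s = sf i

theorem elemGluing_of_isSheaf (F : TopCat.Presheaf AddCommGrpCat.{v} X) (hF : F.IsSheaf) :
    ElemGluing F := by
  intro ι V sf compat
  have h1 : Presieve.IsSheaf (Opens.grothendieckTopology X) (F ⋙ coyoneda.obj (op (ZA.{v}))) :=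
    hF ZA
  have h2 : TopCat.Presheaf.IsSheaf (F ⋙ coyoneda.obj (op (ZA.{v}))) :=
    (isSheaf_iff_isSheaf_of_type _ _).mpr h1
  have h3 := (isSheaf_iff_isSheafUniqueGluing_types _).mp h2
  have compat' : IsCompatible (F ⋙ coyoneda.obj (op (ZA.{v}))) V (fun i => toHom (sf i)) := by
    intro i j
    apply hom_ext_ZA
    show (toHom (sf i) ≫ F.map _) (ULift.up 1) = (toHom (sf j) ≫ F.map _) (ULift.up 1)
    rw [CategoryTheory.comp_apply, CategoryTheory.comp_apply, toHom_one, toHom_one]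
    exact compat i j
  obtain ⟨φ₀, hφ, huniq⟩ := h3 V (fun i => toHom (sf i)) compat'
  let φ : ZA.{v} ⟶ F.obj (op (iSup V)) := φ₀
  refine ⟨φ (ULift.up 1), fun i => ?_, fun s' hs' => ?_⟩
  · have h4 : φ ≫ F.map (Opens.leSupr V i).op = toHom (sf i) := hφ i
    rw [← toHom_one (sf i), ← h4]
    rfl
  · have h5 : toHom s' = φ := by
      apply huniq
      intro i
      apply hom_ext_ZA
      show (toHom s' ≫ F.map _) (ULift.up 1) = toHom (sf i) (ULift.up 1)
      rw [CategoryTheory.comp_apply, toHom_one, toHom_one]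
      exact hs' i
    rw [← h5, toHom_one]

theorem isSheaf_of_elemGluing (F : TopCat.Presheaf AddCommGrpCat.{v} X) (hF : ElemGluing F) :
    F.IsSheaf := by
  intro T
  rw [← isSheaf_iff_isSheaf_of_type]
  have : TopCat.Presheaf.IsSheafUniqueGluing (F ⋙ coyoneda.obj (op T)) := by
    intro ι V f₀ compat
    let f : ∀ i, T ⟶ F.obj (op (V i)) := fun i => f₀ i
    have compatT : ∀ t : T, ∀ i j, F.map (Opens.infLELeft (V i) (V j)).op (f i t) =
        F.map (Opens.infLERight (V i) (V j)).op (f j t) := by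
      intro t i j
      have := congrArg (fun (k : T ⟶ _) => k t) (compat i j)
      simpa using this
    choose φ hφ huniq using fun t => hF V (fun i => f i t) (compatT t)
    have hadd : ∀ t t' : T, φ (t + t') = φ t + φ t' := by
      intro t t'
      refine (huniq (t + t') _ fun i => ?_).symm
      rw [map_add, hφ t i, hφ t' i, map_add]
    let Φ : T ⟶ F.obj (op (iSup V)) := AddCommGrpCat.ofHom (AddMonoidHom.mk' φ hadd)
    refine ⟨Φ, fun i => ?_, fun Ψ₀ hΨ => ?_⟩
    · show Φ ≫ F.map _ = f i
      ext t
      exact hφ t i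
    · let Ψ : T ⟶ F.obj (op (iSup V)) := Ψ₀
      show Ψ = Φ
      ext t
      refine huniq t _ fun i => ?_
      have h6 : Ψ ≫ F.map (Opens.leSupr V i).op = f i := hΨ i
      have := congrArg (fun (k : T ⟶ _) => k t) h6
      simpa using this
  exact (isSheaf_of_isSheafUniqueGluing_types _ this : _)

variable (I : TopCat.Sheaf AddCommGrpCat.{v} X) (U : Opens X)
  (a : I.val.obj (op U))

/-- Restriction map as a function. -/
abbrev rmap {V W : Opens X} (h : V ≤ W) : I.val.obj (op W) ⟶ I.val.obj (op V) :=
  I.val.map (homOfLE h).op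

lemma rmap_rmap {V' V W : Opens X} (h1 : V' ≤ V) (h2 : V ≤ W) (s : I.val.obj (op W)) :
    rmap I h1 (rmap I h2 s) = rmap I (h1.trans h2) s := by
  rw [← CategoryTheory.comp_apply, ← Functor.map_comp]
  rfl

lemma rmap_self {W : Opens X} (s : I.val.obj (op W)) : rmap I (le_refl W) s = s := by
  rw [rmap, show (homOfLE (le_refl W)).op = 𝟙 (op W) from rfl, I.val.map_id]
  rfl

/-- The local predicate: `s` is locally either zero or an integer multiple of `a`. -/
def pred (W : Opens X) (s : I.val.obj (op W)) : Prop :=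
  ∀ x ∈ W, ∃ V : Opens X, x ∈ V ∧ ∃ hVW : V ≤ W,
    rmap I hVW s = 0 ∨ ∃ (hVU : V ≤ U) (n : ℤ), rmap I hVW s = n • rmap I hVU a

lemma pred_res {V W : Opens X} (hVW : V ≤ W) {s : I.val.obj (op W)}
    (hs : pred I U a W s) : pred I U a V (rmap I hVW s) := by
  intro x hx
  obtain ⟨V', hxV', hV'W, hcase⟩ := hs x (hVW hx)
  refine ⟨V' ⊓ V, ⟨hxV', hx⟩, inf_le_right, ?_⟩
  rcases hcase with h0 | ⟨hV'U, n, hn⟩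
  · left
    rw [rmap_rmap, ← rmap_rmap I (inf_le_left : V' ⊓ V ≤ V') hV'W, h0, map_zero]
  · right
    refine ⟨inf_le_left.trans hV'U, n, ?_⟩
    rw [rmap_rmap, ← rmap_rmap I (inf_le_left : V' ⊓ V ≤ V') hV'W, hn, map_zsmul,
      rmap_rmap]

/-- The subgroup of sections satisfying the predicate. -/
def SG (W : Opens X) : AddSubgroup (I.val.obj (op W)) where
  carrier := {s | pred I U a W s}
  zero_mem' := fun x hx => ⟨W, hx, le_refl W, Or.inl (map_zero _)⟩
  add_mem' := by
    intro s t hs ht x hx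
    obtain ⟨Vs, hxVs, hVsW, hcs⟩ := hs x hx
    obtain ⟨Vt, hxVt, hVtW, hct⟩ := ht x hx
    refine ⟨Vs ⊓ Vt, ⟨hxVs, hxVt⟩, inf_le_left.trans hVsW, ?_⟩
    have hres : rmap I (inf_le_left.trans hVsW) (s + t) =
        rmap I (inf_le_left : Vs ⊓ Vt ≤ Vs) (rmap I hVsW s) +
        rmap I (inf_le_right : Vs ⊓ Vt ≤ Vt) (rmap I hVtW t) := by
      rw [rmap_rmap, rmap_rmap, map_add]
    rcases hcs with h0s | ⟨hVsU, ns, hns⟩ <;> rcases hct with h0t | ⟨hVtU, nt, hnt⟩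
    · left
      rw [hres, h0s, h0t, map_zero, map_zero, add_zero]
    · right
      refine ⟨inf_le_right.trans hVtU, nt, ?_⟩
      rw [hres, h0s, hnt, map_zero, zero_add, map_zsmul, rmap_rmap]
    · right
      refine ⟨inf_le_left.trans hVsU, ns, ?_⟩
      rw [hres, h0t, hns, map_zero, add_zero, map_zsmul, rmap_rmap]
    · right
      refine ⟨inf_le_left.trans hVsU, ns + nt, ?_⟩
      rw [hres, hns, hnt, map_zsmul, map_zsmul, rmap_rmap, rmap_rmap, add_zsmul]
  neg_mem' := by
    intro s hs x hx
    obtain ⟨V, hxV, hVW, hc⟩ := hs x hx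
    refine ⟨V, hxV, hVW, ?_⟩
    rcases hc with h0 | ⟨hVU, n, hn⟩
    · left; rw [map_neg, h0, neg_zero]
    · right; exact ⟨hVU, -n, by rw [map_neg, hn, neg_zsmul]⟩

/-- Restriction between the subgroups. -/
def SGmap {V W : Opens X} (h : V ≤ W) :
    AddCommGrpCat.of (SG I U a W) ⟶ AddCommGrpCat.of (SG I U a V) :=
  AddCommGrpCat.ofHom
    (AddMonoidHom.codRestrict ((rmap I h).hom.comp (SG I U a W).subtype)
      (SG I U a V) (fun s => pred_res I U a h s.2))

@[simp] lemma SGmap_coe {V W : Opens X} (h : V ≤ W) (s : SG I U a W) :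
    (SGmap I U a h s).1 = rmap I h s.1 :=
  rfl

/-- The subpresheaf generated by `a`. -/
def Apre : TopCat.Presheaf AddCommGrpCat.{v} X where
  obj W := AddCommGrpCat.of (SG I U a W.unop)
  map {W W'} f := SGmap I U a (leOfHom f.unop)
  map_id W := by
    ext s
    exact rmap_self I s.1
  map_comp {W W' W''} f g := by
    ext s
    exact (rmap_rmap I _ _ s.1).symm

/-- The presheaf `W ↦ A(W ⊓ U)`. -/
def Bpre : TopCat.Presheaf AddCommGrpCat.{v} X where
  obj W := AddCommGrpCat.of (SG I U a (W.unop ⊓ U))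
  map {W W'} f := SGmap I U a (inf_le_inf_right U (leOfHom f.unop))
  map_id W := by
    ext s
    exact rmap_self I s.1
  map_comp {W W' W''} f g := by
    ext s
    exact (rmap_rmap I _ _ s.1).symm

/-- Flexible unique-gluing for `I`. -/
lemma I_glue {ι : Type u} (V : ι → Opens X) (W : Opens X) (hW : W = iSup V)
    (hle : ∀ i, V i ≤ W) (sf : ∀ i, I.val.obj (op (V i)))
    (compat : ∀ i j, I.val.map (Opens.infLELeft (V i) (V j)).op (sf i) =
      I.val.map (Opens.infLERight (V i) (V j)).op (sf j)) :
    ∃! s : I.val.obj (op W), ∀ i, rmap I (hle i) s = sf i := by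
  subst hW
  exact elemGluing_of_isSheaf I.val I.cond V sf compat

/-- Separation for `I`. -/
lemma I_sep {ι : Type u} (V : ι → Opens X) (W : Opens X) (hW : W = iSup V)
    (hle : ∀ i, V i ≤ W) (s t : I.val.obj (op W))
    (h : ∀ i, rmap I (hle i) s = rmap I (hle i) t) : s = t := by
  have compat : ∀ i j, I.val.map (Opens.infLELeft (V i) (V j)).op (rmap I (hle i) s) =
      I.val.map (Opens.infLERight (V i) (V j)).op (rmap I (hle j) s) := by
    intro i j
    show rmap I inf_le_left (rmap I (hle i) s) = rmap I inf_le_right (rmap I (hle j) s)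
    rw [rmap_rmap, rmap_rmap]
  obtain ⟨s₀, hs₀, huniq⟩ := I_glue I V W hW hle (fun i => rmap I (hle i) s) compat
  exact (huniq s fun i => rfl).trans (huniq t fun i => (h i).symm).symm
lemma elemGluing_A : ElemGluing (Apre I U a) := by
  intro ι V sf compat
  have compatI : ∀ i j, I.val.map (Opens.infLELeft (V i) (V j)).op ((sf i).1) =
      I.val.map (Opens.infLERight (V i) (V j)).op ((sf j).1) := fun i j =>
    congrArg Subtype.val (compat i j)
  obtain ⟨s, hs, huniq⟩ := I_glue I V (iSup V) rfl (fun i => le_iSup V i)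
    (fun i => (sf i).1) compatI
  have hpred : pred I U a (iSup V) s := by
    intro x hx
    obtain ⟨i, hxi⟩ := Opens.mem_iSup.mp hx
    obtain ⟨V', hxV', hV'Vi, hc⟩ := (sf i).2 x hxi
    refine ⟨V', hxV', hV'Vi.trans (le_iSup V i), ?_⟩
    have hres : rmap I (hV'Vi.trans (le_iSup V i)) s = rmap I hV'Vi ((sf i).1) := by
      rw [← hs i, rmap_rmap]
    rcases hc with h0 | ⟨hVU, n, hn⟩
    · left; rw [hres, h0]
    · right; exact ⟨hVU, n, by rw [hres, hn]⟩
  exact ⟨⟨s, hpred⟩, fun i => Subtype.ext (hs i),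
    fun t ht => Subtype.ext (huniq t.1 (fun i => congrArg Subtype.val (ht i)))⟩

lemma elemGluing_B : ElemGluing (Bpre I U a) := by
  intro ι V sf compat
  have hW : (iSup V ⊓ U : Opens X) = ⨆ i, V i ⊓ U := by
    ext x
    simp only [Opens.coe_inf, Opens.coe_iSup, Set.mem_inter_iff, Set.mem_iUnion]
    tauto
  have hle : ∀ i, V i ⊓ U ≤ iSup V ⊓ U := fun i => inf_le_inf_right U (le_iSup V i)
  have compatI : ∀ i j, I.val.map (Opens.infLELeft (V i ⊓ U) (V j ⊓ U)).op ((sf i).1) =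
      I.val.map (Opens.infLERight (V i ⊓ U) (V j ⊓ U)).op ((sf j).1) := by
    intro i j
    have h_i : (V i ⊓ V j) ⊓ U ≤ V i ⊓ U := inf_le_inf_right U inf_le_left
    have h_j : (V i ⊓ V j) ⊓ U ≤ V j ⊓ U := inf_le_inf_right U inf_le_right
    have hZ : (V i ⊓ U) ⊓ (V j ⊓ U) ≤ (V i ⊓ V j) ⊓ U :=
      le_inf (le_inf (inf_le_left.trans inf_le_left) (inf_le_right.trans inf_le_left))
        (inf_le_left.trans inf_le_right)
    show rmap I (hZ.trans h_i) ((sf i).1) = rmap I (hZ.trans h_j) ((sf j).1)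
    rw [← rmap_rmap I hZ h_i, ← rmap_rmap I hZ h_j,
      show rmap I h_i ((sf i).1) = rmap I h_j ((sf j).1) from congrArg Subtype.val (compat i j)]
  obtain ⟨s, hs, huniq⟩ := I_glue I (fun i => V i ⊓ U) (iSup V ⊓ U) hW hle
    (fun i => (sf i).1) compatI
  have hpred : pred I U a (iSup V ⊓ U) s := by
    intro x hx
    obtain ⟨i, hxi⟩ := Opens.mem_iSup.mp hx.1
    obtain ⟨V', hxV', hV'Vi, hc⟩ := (sf i).2 x ⟨hxi, hx.2⟩
    refine ⟨V', hxV', hV'Vi.trans (hle i), ?_⟩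
    have hres : rmap I (hV'Vi.trans (hle i)) s = rmap I hV'Vi ((sf i).1) := by
      rw [← hs i, rmap_rmap]
    rcases hc with h0 | ⟨hVU, n, hn⟩
    · left; rw [hres, h0]
    · right; exact ⟨hVU, n, by rw [hres, hn]⟩
  exact ⟨⟨s, hpred⟩, fun i => Subtype.ext (hs i),
    fun t ht => Subtype.ext (huniq t.1 (fun i => congrArg Subtype.val (ht i)))⟩

/-- The sheaf `A`. -/
def Ash : TopCat.Sheaf AddCommGrpCat.{v} X :=
  ⟨Apre I U a, isSheaf_of_elemGluing _ (elemGluing_A I U a)⟩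

/-- The sheaf `B`. -/
def Bsh : TopCat.Sheaf AddCommGrpCat.{v} X :=
  ⟨Bpre I U a, isSheaf_of_elemGluing _ (elemGluing_B I U a)⟩

/-- The restriction morphism `A ⟶ B`. -/
def mPre : Apre I U a ⟶ Bpre I U a where
  app W := SGmap I U a (inf_le_left : W.unop ⊓ U ≤ W.unop)
  naturality W W' f := by
    ext s
    exact Subtype.ext ((rmap_rmap I _ _ _).trans (rmap_rmap I _ _ _).symm)

/-- The inclusion `A ⟶ I`. -/
def gPre : Apre I U a ⟶ I.val where
  app W := AddCommGrpCat.ofHom (SG I U a W.unop).subtype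
  naturality W W' f := by
    ext s
    rfl

lemma res_injective {W : Opens X} (s t : SG I U a W)
    (h0 : rmap I (inf_le_left : W ⊓ U ≤ W) s.1 = rmap I inf_le_left t.1) : s = t := by
  classical
  let ι := {x : ↑X // x ∈ W}
  let Vs : ι → Opens X := fun p => (s.2 p.1 p.2).choose
  let Vt : ι → Opens X := fun p => (t.2 p.1 p.2).choose
  let V : ι → Opens X := fun p => Vs p ⊓ Vt p
  have hx : ∀ p : ι, p.1 ∈ V p := fun p =>
    ⟨(s.2 p.1 p.2).choose_spec.1, (t.2 p.1 p.2).choose_spec.1⟩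
  have hles : ∀ p, Vs p ≤ W := fun p => (s.2 p.1 p.2).choose_spec.2.choose
  have hlet : ∀ p, Vt p ≤ W := fun p => (t.2 p.1 p.2).choose_spec.2.choose
  have hle : ∀ p, V p ≤ W := fun p => inf_le_left.trans (hles p)
  have hcs : ∀ p, rmap I (hles p) s.1 = 0 ∨
      ∃ (hVU : Vs p ≤ U) (n : ℤ), rmap I (hles p) s.1 = n • rmap I hVU a :=
    fun p => (s.2 p.1 p.2).choose_spec.2.choose_spec
  have hct : ∀ p, rmap I (hlet p) t.1 = 0 ∨
      ∃ (hVU : Vt p ≤ U) (n : ℤ), rmap I (hlet p) t.1 = n • rmap I hVU a :=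
    fun p => (t.2 p.1 p.2).choose_spec.2.choose_spec
  -- if `V p ≤ U`, restrictions of `s` and `t` agree on `V p` by `h0`
  have hfromU : ∀ p, V p ≤ U → rmap I (hle p) s.1 = rmap I (hle p) t.1 := by
    intro p hVU
    have hVWU : V p ≤ W ⊓ U := le_inf (hle p) hVU
    rw [show rmap I (hle p) s.1 = rmap I (hVWU.trans inf_le_left) s.1 from rfl,
      ← rmap_rmap I hVWU inf_le_left, h0, rmap_rmap]
  have hagree : ∀ p, rmap I (hle p) s.1 = rmap I (hle p) t.1 := by
    intro p
    rcases hcs p with h0s | ⟨hVsU, ns, hns⟩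
    · rcases hct p with h0t | ⟨hVtU, nt, hnt⟩
      · have e1 : rmap I (hle p) s.1 =
            rmap I (inf_le_left : V p ≤ Vs p) (rmap I (hles p) s.1) := by
          rw [rmap_rmap]
        have e2 : rmap I (hle p) t.1 =
            rmap I (inf_le_right : V p ≤ Vt p) (rmap I (hlet p) t.1) := by
          rw [rmap_rmap]
        rw [e1, e2, h0s, h0t, map_zero, map_zero]
      · exact hfromU p (inf_le_right.trans hVtU)
    · exact hfromU p (inf_le_left.trans hVsU)
  have hWle : W ≤ iSup V := fun x hxW => Opens.mem_iSup.mpr ⟨⟨x, hxW⟩, hx _⟩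
  have hWeq : W = iSup V := le_antisymm hWle (iSup_le hle)
  exact Subtype.ext (I_sep I V W hWeq hle s.1 t.1 hagree)

end FlabbyAux

open FlabbyAux in
/-- Every injective object in the category of sheaves of abelian groups on
a topological space `X` is flabby: all restriction maps `I(X) → I(U)` are surjective. -/
theorem injective_sheaf_is_flabby (X : TopCat) (I : TopCat.Sheaf AddCommGrpCat X)
    (hI : Injective I) (U : Opens X) :
    Function.Surjective (I.val.map (homOfLE (le_top : U ≤ ⊤)).op) := by
  intro a
  have ha : pred I U a U a := fun x hx =>
    ⟨U, hx, le_refl U, Or.inr ⟨le_refl U, 1, (one_zsmul _).symm⟩⟩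
  haveI happ : ∀ W, Mono ((mPre I U a).app W) := by
    intro W
    apply ConcreteCategory.mono_of_injective
    intro s t hst
    exact res_injective I U a s t (congrArg Subtype.val hst)
  haveI : Mono (mPre I U a) := NatTrans.mono_of_mono_app _
  let mSh : Ash I U a ⟶ Bsh I U a := ⟨mPre I U a⟩
  haveI : Mono mSh := by
    have hm : Mono mSh.hom := by
      show Mono (mPre I U a)
      infer_instance
    exact Sheaf.Hom.mono_of_presheaf_mono _ _ mSh
  let gSh : Ash I U a ⟶ I := ⟨gPre I U a⟩
  let h := Injective.factorThru gSh mSh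
  have hfact : mSh ≫ h = gSh := Injective.comp_factorThru _ _
  let β : (Bpre I U a).obj (op (⊤ : Opens X)) :=
    ⟨rmap I (inf_le_right : ⊤ ⊓ U ≤ U) a, pred_res I U a _ ha⟩
  refine ⟨h.hom.app (op ⊤) β, ?_⟩
  have hnat := h.hom.naturality (homOfLE (le_top : U ≤ ⊤)).op
  show I.obj.map (homOfLE (le_top : U ≤ ⊤)).op (h.hom.app (op ⊤) β) = a
  refine (ConcreteCategory.congr_hom hnat β).symm.trans ?_
  change h.hom.app (op U) ((Bsh I U a).obj.map (homOfLE (le_top : U ≤ ⊤)).op β) = a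
  have hβ : (Bsh I U a).val.map (homOfLE (le_top : U ≤ ⊤)).op β =
      (mPre I U a).app (op U) ⟨a, ha⟩ := by
    apply Subtype.ext
    show rmap I _ (rmap I _ a) = rmap I _ a
    rw [rmap_rmap]
  rw [hβ]
  have hfapp := congrArg (fun (k : Ash I U a ⟶ I) => k.hom.app (op U) ⟨a, ha⟩) hfact
  exact hfapp
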